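/- Suppose $X$ and $Y$ are normed vector spaces, $A \subset X$, $a \in A$, and $f : A \to Y$ is differentiable relative to $A$ at $a$ with relative derivative $Df(a)$ defined on the tangent cone $\mathrm{Tan}(A,a)$. Then $\sup\{|Df(a)(u)| : u \in \mathrm{Tan}(A,a), |u| = 1\} \leq \limsup_{x \to a,\, x \in A} |f(x)-f(a)|/|x-a|$, and equality holds if $X$ is finite dimensional. -/
import Mathlib


open Filter

theorem aux_normalize {X : Type*} [NormedAddCommGroup X] [NormedSpace ℝ X]
    (w u : X) (hu : ‖u‖ = 1) (hw : ‖w - u‖ ≤ 1/2) :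
    ‖‖w‖⁻¹ • w - u‖ ≤ 4 * ‖w - u‖ := by
  have habs := abs_norm_sub_norm_le w u
  rw [hu, abs_le] at habs
  have hwn : (1:ℝ)/2 ≤ ‖w‖ := by linarith [habs.1]
  have hwpos : (0:ℝ) < ‖w‖ := by linarith
  have h1 : ‖w‖⁻¹ • w - u = ‖w‖⁻¹ • (w - u) + (‖w‖⁻¹ - 1) • u := by
    simp [smul_sub, sub_smul]

  rw [h1]
  have h2 : ‖(‖w‖⁻¹ - 1) • u‖ = |‖w‖⁻¹ - 1| := by
    rw [norm_smul, hu, Real.norm_eq_abs, mul_one]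
  have h3 : |‖w‖⁻¹ - 1| ≤ ‖w‖⁻¹ * ‖w - u‖ := by
    have he : ‖w‖⁻¹ - 1 = ‖w‖⁻¹ * (1 - ‖w‖) := by field_simp
    rw [he, abs_mul, abs_of_pos (by positivity : (0:ℝ) < ‖w‖⁻¹)]
    have hb : |1 - ‖w‖| ≤ ‖w - u‖ := by
      rw [abs_le]; constructor <;> linarith [habs.1, habs.2]
    exact mul_le_mul_of_nonneg_left hb (by positivity)
  have h4 : ‖w‖⁻¹ ≤ 2 := by
    rw [inv_le_comm₀ hwpos (by norm_num)]
    linarith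
  have h0 : (0:ℝ) ≤ ‖w - u‖ := norm_nonneg _
  calc ‖‖w‖⁻¹ • (w - u) + (‖w‖⁻¹ - 1) • u‖
      ≤ ‖‖w‖⁻¹ • (w - u)‖ + ‖(‖w‖⁻¹ - 1) • u‖ := norm_add_le _ _
    _ ≤ ‖w‖⁻¹ * ‖w - u‖ + ‖w‖⁻¹ * ‖w - u‖ := by
        rw [h2, norm_smul, Real.norm_eq_abs, abs_of_pos (by positivity : (0:ℝ) < ‖w‖⁻¹)]
        linarith [h3]
    _ ≤ 2 * ‖w - u‖ + 2 * ‖w - u‖ := by nlinarith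
    _ = 4 * ‖w - u‖ := by ring

theorem aux_key {X Y : Type*}
    [NormedAddCommGroup X] [NormedSpace ℝ X] [NormedAddCommGroup Y] [NormedSpace ℝ Y]
    (A : Set X) (a : X) (ha : a ∈ A) (f g : X → Y) (U : Set X)
    (hU : U ∈ nhds a) (hg : DifferentiableAt ℝ g a)
    (hfg : ∀ x ∈ A ∩ U, f x = g x) (ε : ℝ) (hε : 0 < ε) :
    ∀ᶠ x in nhdsWithin a (A \ {a}), x ∈ A ∧ x ≠ a ∧
      |‖f x - f a‖ / ‖x - a‖ - ‖fderiv ℝ g a (‖x - a‖⁻¹ • (x - a))‖| ≤ ε := by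
  set L := fderiv ℝ g a with hL
  have hlo : (fun x => g x - g a - L (x - a)) =o[nhds a] fun x => x - a :=
    hg.hasFDerivAt.isLittleO
  have h1 : ∀ᶠ x in nhds a, ‖g x - g a - L (x - a)‖ ≤ ε * ‖x - a‖ :=
    hlo.def hε
  have h2 : ∀ᶠ x in nhdsWithin a (A \ {a}), ‖g x - g a - L (x - a)‖ ≤ ε * ‖x - a‖ :=
    h1.filter_mono nhdsWithin_le_nhds
  have h3 : ∀ᶠ x in nhdsWithin a (A \ {a}), x ∈ U :=
    (eventually_mem_nhds_iff.mpr hU |>.mono fun x hx => mem_of_mem_nhds hx).filter_mono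
      nhdsWithin_le_nhds
  have h4 : ∀ᶠ x in nhdsWithin a (A \ {a}), x ∈ A \ {a} := self_mem_nhdsWithin
  have hfa : f a = g a := hfg a ⟨ha, mem_of_mem_nhds hU⟩
  filter_upwards [h2, h3, h4] with x hx2 hx3 hx4
  obtain ⟨hxA, hxa⟩ := hx4
  have hxa' : x ≠ a := hxa
  refine ⟨hxA, hxa', ?_⟩
  have hfx : f x = g x := hfg x ⟨hxA, hx3⟩
  have hna : (0:ℝ) < ‖x - a‖ := by
    rw [norm_pos_iff]
    exact sub_ne_zero.mpr hxa'
  have hLs : ‖L (‖x - a‖⁻¹ • (x - a))‖ = ‖L (x - a)‖ / ‖x - a‖ := by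
    rw [map_smul, norm_smul, Real.norm_eq_abs, abs_of_pos (by positivity)]
    rw [div_eq_inv_mul]
  rw [hLs, hfx, hfa, div_sub_div_same, abs_div, abs_of_pos hna, div_le_iff₀ hna]
  calc |‖g x - g a‖ - ‖L (x - a)‖| ≤ ‖g x - g a - L (x - a)‖ := abs_norm_sub_norm_le _ _
    _ ≤ ε * ‖x - a‖ := hx2

theorem aux_part1 {X Y : Type*}
    [NormedAddCommGroup X] [NormedSpace ℝ X] [NormedAddCommGroup Y] [NormedSpace ℝ Y]
    (A : Set X) (a : X) (ha : a ∈ A) (f g : X → Y) (U : Set X)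
    (hU : U ∈ nhds a) (hg : DifferentiableAt ℝ g a)
    (hfg : ∀ x ∈ A ∩ U, f x = g x)
    (T : Set X)
    (hT : T = {u | ∀ ε > (0 : ℝ), ∃ x ∈ A, ∃ r : ℝ,
      0 < r ∧ ‖x - a‖ < ε ∧ ‖r • (x - a) - u‖ < ε}) :
    (⨆ u : {u : X // u ∈ T ∧ ‖u‖ = 1}, ENNReal.ofReal ‖fderiv ℝ g a u.1‖) ≤
      Filter.limsup (fun x => ENNReal.ofReal (‖f x - f a‖ / ‖x - a‖))
        (nhdsWithin a (A \ {a})) := by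
  set L := fderiv ℝ g a with hLdef
  apply iSup_le
  rintro ⟨u, huT, hun⟩
  simp only
  rw [Filter.limsup_eq]
  apply le_sInf
  intro b hb
  simp only [Set.mem_setOf_eq] at hb
  -- b is an eventual upper bound
  apply ENNReal.le_of_forall_pos_le_add
  intro ε hε hblt
  have hε' : (0:ℝ) < (ε:ℝ) := hε
  -- combine eventualities
  have hev := (aux_key A a ha f g U hU hg hfg ((ε:ℝ)/2) (by linarith)).and hb
  rw [eventually_nhdsWithin_iff] at hev
  obtain ⟨δ, hδpos, hδ⟩ := Metric.eventually_nhds_iff_ball.mp hev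
  set C := ‖L‖ with hC
  have hCnn : (0:ℝ) ≤ C := norm_nonneg _
  set ε₁ : ℝ := min δ (min (1/2) ((ε:ℝ)/(8*(C+1)))) with hε₁def
  have hε₁pos : 0 < ε₁ := by
    apply lt_min hδpos
    apply lt_min (by norm_num)
    positivity
  have hε₁δ : ε₁ ≤ δ := min_le_left _ _
  have hε₁half : ε₁ ≤ 1/2 := le_trans (min_le_right _ _) (min_le_left _ _)
  have hε₁C : ε₁ ≤ (ε:ℝ)/(8*(C+1)) := le_trans (min_le_right _ _) (min_le_right _ _)
  rw [hT] at huT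
  obtain ⟨x, hxA, r, hr, hxnear, hru⟩ := huT ε₁ hε₁pos
  have hxa : x ≠ a := by
    intro h
    rw [h] at hru
    simp at hru
    rw [hun] at hru
    linarith
  have hxball : x ∈ Metric.ball a δ := by
    rw [Metric.mem_ball, dist_eq_norm]
    exact lt_of_lt_of_le hxnear hε₁δ
  obtain ⟨⟨_, _, hkey⟩, hbx⟩ := hδ x hxball ⟨hxA, hxa⟩
  -- the unit direction
  set w : X := r • (x - a) with hw
  have hwv : ‖w‖⁻¹ • w = ‖x - a‖⁻¹ • (x - a) := by
    have hna : (0:ℝ) < ‖x - a‖ := by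
      rw [norm_pos_iff]; exact sub_ne_zero.mpr hxa
    have hrne : r ≠ 0 := ne_of_gt hr
    rw [hw, norm_smul, Real.norm_eq_abs, abs_of_pos hr, mul_inv, smul_smul]
    congr 1
    field_simp
  have hwu : ‖w - u‖ ≤ 1/2 := le_trans (le_of_lt hru) hε₁half
  have hnorm4 : ‖‖x - a‖⁻¹ • (x - a) - u‖ ≤ 4 * ε₁ := by
    rw [← hwv]
    calc ‖‖w‖⁻¹ • w - u‖ ≤ 4 * ‖w - u‖ := aux_normalize w u hun hwu
      _ ≤ 4 * ε₁ := by linarith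
  set v : X := ‖x - a‖⁻¹ • (x - a) with hv
  have hLu : ‖L u‖ ≤ ‖L v‖ + C * (4 * ε₁) := by
    have : ‖L u - L v‖ ≤ C * (4 * ε₁) := by
      rw [← map_sub]
      calc ‖L (u - v)‖ ≤ C * ‖u - v‖ := L.le_opNorm _
        _ ≤ C * (4 * ε₁) := by
            apply mul_le_mul_of_nonneg_left _ hCnn
            rw [← norm_neg (u - v), neg_sub]
            exact hnorm4
    calc ‖L u‖ ≤ ‖L v‖ + ‖L u - L v‖ := by
          have := norm_sub_norm_le (L u) (L v)
          linarith [abs_le.mp (abs_norm_sub_norm_le (L u) (L v)) |>.1]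
      _ ≤ ‖L v‖ + C * (4 * ε₁) := by linarith
  have hq : ‖L v‖ ≤ ‖f x - f a‖ / ‖x - a‖ + (ε:ℝ)/2 := by
    have := abs_le.mp hkey
    linarith [this.1]
  have hfinal : ‖L u‖ ≤ ‖f x - f a‖ / ‖x - a‖ + (ε:ℝ) := by
    have hCε : C * (4 * ε₁) ≤ (ε:ℝ)/2 := by
      calc C * (4 * ε₁) ≤ C * (4 * ((ε:ℝ)/(8*(C+1)))) := by
            apply mul_le_mul_of_nonneg_left _ hCnn
            linarith
        _ = (ε:ℝ)/2 * (C/(C+1)) := by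
            field_simp
            ring
        _ ≤ (ε:ℝ)/2 * 1 := by
            apply mul_le_mul_of_nonneg_left _ (by positivity)
            rw [div_le_one (by positivity)]
            linarith
        _ = (ε:ℝ)/2 := mul_one _
    linarith
  calc ENNReal.ofReal ‖L u‖ ≤ ENNReal.ofReal (‖f x - f a‖ / ‖x - a‖ + (ε:ℝ)) :=
        ENNReal.ofReal_le_ofReal hfinal
    _ = ENNReal.ofReal (‖f x - f a‖ / ‖x - a‖) + ENNReal.ofReal (ε:ℝ) := by
        rw [ENNReal.ofReal_add (by positivity) (le_of_lt hε')]
    _ ≤ b + ε := by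
        apply add_le_add hbx
        rw [ENNReal.ofReal_coe_nnreal]

theorem aux_part2 {X Y : Type*}
    [NormedAddCommGroup X] [NormedSpace ℝ X] [NormedAddCommGroup Y] [NormedSpace ℝ Y]
    (A : Set X) (a : X) (ha : a ∈ A) (f g : X → Y) (U : Set X)
    (hU : U ∈ nhds a) (hg : DifferentiableAt ℝ g a)
    (hfg : ∀ x ∈ A ∩ U, f x = g x)
    (T : Set X)
    (hT : T = {u | ∀ ε > (0 : ℝ), ∃ x ∈ A, ∃ r : ℝ,
      0 < r ∧ ‖x - a‖ < ε ∧ ‖r • (x - a) - u‖ < ε})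
    (hfd : FiniteDimensional ℝ X) :
    Filter.limsup (fun x => ENNReal.ofReal (‖f x - f a‖ / ‖x - a‖))
        (nhdsWithin a (A \ {a})) ≤
      (⨆ u : {u : X // u ∈ T ∧ ‖u‖ = 1}, ENNReal.ofReal ‖fderiv ℝ g a u.1‖) := by
  set L := fderiv ℝ g a with hLdef
  set S := (⨆ u : {u : X // u ∈ T ∧ ‖u‖ = 1}, ENNReal.ofReal ‖L u.1‖) with hSdef
  set F := nhdsWithin a (A \ {a}) with hFdef
  -- S is finite
  have hSfin : S ≤ ENNReal.ofReal ‖L‖ := by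
    apply iSup_le
    rintro ⟨u, huT, hun⟩
    apply ENNReal.ofReal_le_ofReal
    calc ‖L u‖ ≤ ‖L‖ * ‖u‖ := L.le_opNorm u
      _ = ‖L‖ := by rw [hun, mul_one]
  have hSne : S ≠ ⊤ := by
    intro h
    rw [h] at hSfin
    exact ENNReal.ofReal_ne_top (top_le_iff.mp hSfin)
  apply ENNReal.le_of_forall_pos_le_add
  intro ε hε hlt
  have hε' : (0:ℝ) < (ε:ℝ) := hε
  -- it suffices that eventually φ x ≤ S + ε
  have hevent : ∀ᶠ x in F, ENNReal.ofReal (‖f x - f a‖ / ‖x - a‖) ≤ S + (ε : ENNReal) := by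
    by_contra hc
    rw [Filter.not_eventually] at hc
    -- strengthen to include key estimate
    have hc2 : ∃ᶠ x in F, (x ∈ A ∧ x ≠ a ∧
        |‖f x - f a‖ / ‖x - a‖ - ‖L (‖x - a‖⁻¹ • (x - a))‖| ≤ (ε:ℝ)/4) ∧
        ¬ ENNReal.ofReal (‖f x - f a‖ / ‖x - a‖) ≤ S + (ε : ENNReal) :=
      hc.and_eventually (aux_key A a ha f g U hU hg hfg ((ε:ℝ)/4) (by linarith)) |>.mono
        (fun x hx => ⟨hx.2, hx.1⟩)
    obtain ⟨xs, hxs_tendsto, hxs⟩ := Filter.exists_seq_forall_of_frequently hc2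
    -- unit direction sequence
    set v : ℕ → X := fun n => ‖xs n - a‖⁻¹ • (xs n - a) with hv
    have hvmem : ∀ n, v n ∈ Metric.sphere (0:X) 1 := by
      intro n
      have hne : xs n ≠ a := (hxs n).1.2.1
      have hna : (0:ℝ) < ‖xs n - a‖ := by
        rw [norm_pos_iff]; exact sub_ne_zero.mpr hne
      simp only [Metric.mem_sphere, dist_zero_right, hv]
      rw [norm_smul, Real.norm_eq_abs, abs_of_pos (by positivity)]
      field_simp
    have hcompact : IsCompact (Metric.sphere (0:X) 1) := isCompact_sphere 0 1
    obtain ⟨u, husph, ψ, hψmono, hψtendsto⟩ := hcompact.tendsto_subseq hvmem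
    have hun : ‖u‖ = 1 := by simpa using husph
    -- xs → a
    have hxs_nhds : Filter.Tendsto xs atTop (nhds a) :=
      hxs_tendsto.mono_right nhdsWithin_le_nhds
    have hxsψ : Filter.Tendsto (fun n => xs (ψ n)) atTop F :=
      hxs_tendsto.comp hψmono.tendsto_atTop
    have hxsψ_nhds : Filter.Tendsto (fun n => xs (ψ n)) atTop (nhds a) :=
      hxsψ.mono_right nhdsWithin_le_nhds
    have hnormto : Filter.Tendsto (fun n => ‖xs (ψ n) - a‖) atTop (nhds 0) := by
      have h0 : Filter.Tendsto (fun n => xs (ψ n) - a) atTop (nhds (a - a)) :=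
        hxsψ_nhds.sub tendsto_const_nhds
      rw [sub_self] at h0
      simpa using h0.norm
    -- u ∈ T
    have huT : u ∈ T := by
      rw [hT]
      intro ε' hε'pos
      have h1 : ∀ᶠ n in atTop, ‖xs (ψ n) - a‖ < ε' :=
        hnormto.eventually (gt_mem_nhds hε'pos)
      have h2 : ∀ᶠ n in atTop, ‖v (ψ n) - u‖ < ε' := by
        have := hψtendsto
        rw [tendsto_iff_norm_sub_tendsto_zero] at this
        exact this.eventually (gt_mem_nhds hε'pos)
      obtain ⟨n, hn1, hn2⟩ := (h1.and h2).exists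
      refine ⟨xs (ψ n), (hxs (ψ n)).1.1, ‖xs (ψ n) - a‖⁻¹, ?_, hn1, ?_⟩
      · have hne : xs (ψ n) ≠ a := (hxs (ψ n)).1.2.1
        have : (0:ℝ) < ‖xs (ψ n) - a‖ := by
          rw [norm_pos_iff]; exact sub_ne_zero.mpr hne
        positivity
      · exact hn2
    -- so ofReal ‖L u‖ ≤ S
    have hLuS : ENNReal.ofReal ‖L u‖ ≤ S :=
      le_iSup (fun u : {u : X // u ∈ T ∧ ‖u‖ = 1} => ENNReal.ofReal ‖L u.1‖) ⟨u, huT, hun⟩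
    -- ‖L (v (ψ n))‖ → ‖L u‖
    have hLv : Filter.Tendsto (fun n => ‖L (v (ψ n))‖) atTop (nhds ‖L u‖) :=
      ((L.continuous.tendsto u).comp hψtendsto).norm
    have h3 : ∀ᶠ n in atTop, ‖L (v (ψ n))‖ ≤ ‖L u‖ + (ε:ℝ)/4 :=
      hLv.eventually (eventually_le_nhds (by linarith))
    obtain ⟨n, hn3⟩ := h3.exists
    -- contradiction with the quotient bound at n
    have hkey := (hxs (ψ n)).1.2.2
    have hnot := (hxs (ψ n)).2
    apply hnot
    have hq : ‖f (xs (ψ n)) - f a‖ / ‖xs (ψ n) - a‖ ≤ ‖L u‖ + (ε:ℝ)/2 := by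
      have := abs_le.mp hkey
      have h4 : ‖f (xs (ψ n)) - f a‖ / ‖xs (ψ n) - a‖ ≤ ‖L (v (ψ n))‖ + (ε:ℝ)/4 := by
        linarith [this.2]
      linarith
    calc ENNReal.ofReal (‖f (xs (ψ n)) - f a‖ / ‖xs (ψ n) - a‖)
        ≤ ENNReal.ofReal (‖L u‖ + (ε:ℝ)/2) := ENNReal.ofReal_le_ofReal hq
      _ = ENNReal.ofReal ‖L u‖ + ENNReal.ofReal ((ε:ℝ)/2) := by
          rw [ENNReal.ofReal_add (norm_nonneg _) (by linarith)]
      _ ≤ S + (ε : ENNReal) := by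
          apply add_le_add hLuS
          calc ENNReal.ofReal ((ε:ℝ)/2) ≤ ENNReal.ofReal (ε:ℝ) :=
                ENNReal.ofReal_le_ofReal (by linarith)
            _ = (ε : ENNReal) := ENNReal.ofReal_coe_nnreal
  calc Filter.limsup (fun x => ENNReal.ofReal (‖f x - f a‖ / ‖x - a‖)) F
      ≤ S + (ε : ENNReal) := Filter.limsup_le_of_le (by isBoundedDefault) hevent
    _ = S + (ε : ENNReal) := rfl

/-- the norm of the derivative relative to `A` on the (Federer) tangent cone is
bounded by the limsup of difference quotients, with equality in finite dimensions.
Here `g` is a local differentiable extension of `f`, so that `Df(a) = Dg(a)|Tan(A,a)`. -/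
theorem relative_differential_sup_eq_limsup {X Y : Type*}
    [NormedAddCommGroup X] [NormedSpace ℝ X] [NormedAddCommGroup Y] [NormedSpace ℝ Y]
    (A : Set X) (a : X) (ha : a ∈ A) (f g : X → Y) (U : Set X)
    (hU : U ∈ nhds a) (hg : DifferentiableAt ℝ g a)
    (hfg : ∀ x ∈ A ∩ U, f x = g x)
    (T : Set X)
    (hT : T = {u | ∀ ε > (0 : ℝ), ∃ x ∈ A, ∃ r : ℝ,
      0 < r ∧ ‖x - a‖ < ε ∧ ‖r • (x - a) - u‖ < ε}) :
    (⨆ u : {u : X // u ∈ T ∧ ‖u‖ = 1}, ENNReal.ofReal ‖fderiv ℝ g a u.1‖) ≤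
      Filter.limsup (fun x => ENNReal.ofReal (‖f x - f a‖ / ‖x - a‖))
        (nhdsWithin a (A \ {a})) ∧
    (FiniteDimensional ℝ X →
      (⨆ u : {u : X // u ∈ T ∧ ‖u‖ = 1}, ENNReal.ofReal ‖fderiv ℝ g a u.1‖) =
        Filter.limsup (fun x => ENNReal.ofReal (‖f x - f a‖ / ‖x - a‖))
          (nhdsWithin a (A \ {a}))) := by
  refine ⟨aux_part1 A a ha f g U hU hg hfg T hT, fun hfd => ?_⟩
  exact le_antisymm (aux_part1 A a ha f g U hU hg hfg T hT)
    (aux_part2 A a ha f g U hU hg hfg T hT hfd)
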